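/- The orthogonality graph G_13 of the 13 column vectors (1,0,0), (0,1,0), (0,0,1), (1,1,0), (1,-1,0), (1,0,1), (1,0,-1), (0,1,1), (0,1,-1), (1,1,1), (1,1,-1), (1,-1,1), (-1,1,1) in ℝ³ has chromatic number at least 4. -/

import Mathlib

/-- The 13 vectors in ℝ³ defining the graph `G₁₃`. -/
def g13Vecs : Fin 13 → (Fin 3 → ℝ) :=
  ![![1,0,0], ![0,1,0], ![0,0,1], ![1,1,0], ![1,-1,0], ![1,0,1], ![1,0,-1],
    ![0,1,1], ![0,1,-1], ![1,1,1], ![1,1,-1], ![1,-1,1], ![-1,1,1]]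

/-- The orthogonality graph `G₁₃`. -/
def G13 : SimpleGraph (Fin 13) :=
  SimpleGraph.fromRel (fun i j => dotProduct (g13Vecs i) (g13Vecs j) = 0)

lemma g13_adj (i j : Fin 13) (hne : i ≠ j)
    (h : dotProduct (g13Vecs i) (g13Vecs j) = 0) : G13.Adj i j := by
  rw [G13, SimpleGraph.fromRel_adj]
  exact ⟨hne, Or.inl h⟩

set_option maxHeartbeats 1000000 in
set_option synthInstance.maxHeartbeats 1000000 in
set_option synthInstance.maxSize 2000 in
lemma g13key : ∀ a3 a4 a5 a6 a7 a8 a9 a10 a11 a12 : Fin 3,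
  ¬(a3 ≠ 2 ∧ a4 ≠ 2 ∧ a5 ≠ 1 ∧ a6 ≠ 1 ∧ a7 ≠ 0 ∧ a8 ≠ 0 ∧
    a3 ≠ a4 ∧ a3 ≠ a11 ∧ a3 ≠ a12 ∧ a4 ≠ a9 ∧ a4 ≠ a10 ∧ a5 ≠ a6 ∧ a5 ≠ a10 ∧ a5 ≠ a12 ∧
    a6 ≠ a9 ∧ a6 ≠ a11 ∧ a7 ≠ a8 ∧ a7 ≠ a10 ∧ a7 ≠ a11 ∧ a8 ≠ a9 ∧ a8 ≠ a12) := by decide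

lemma g13_not_colorable : ¬ G13.Colorable 3 := by
  rintro ⟨C⟩
  have h_0_1 : G13.Adj 0 1 := g13_adj 0 1 (by decide)
    (by show dotProduct ![(1:ℝ),0,0] ![0,1,0] = 0; norm_num [dotProduct, Fin.sum_univ_three, Matrix.cons_val_two, Matrix.tail_cons, Matrix.head_cons])
  have h_0_2 : G13.Adj 0 2 := g13_adj 0 2 (by decide)
    (by show dotProduct ![(1:ℝ),0,0] ![0,0,1] = 0; norm_num [dotProduct, Fin.sum_univ_three, Matrix.cons_val_two, Matrix.tail_cons, Matrix.head_cons])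
  have h_1_2 : G13.Adj 1 2 := g13_adj 1 2 (by decide)
    (by show dotProduct ![(0:ℝ),1,0] ![0,0,1] = 0; norm_num [dotProduct, Fin.sum_univ_three, Matrix.cons_val_two, Matrix.tail_cons, Matrix.head_cons])
  have h_2_3 : G13.Adj 2 3 := g13_adj 2 3 (by decide)
    (by show dotProduct ![(0:ℝ),0,1] ![1,1,0] = 0; norm_num [dotProduct, Fin.sum_univ_three, Matrix.cons_val_two, Matrix.tail_cons, Matrix.head_cons])
  have h_2_4 : G13.Adj 2 4 := g13_adj 2 4 (by decide)
    (by show dotProduct ![(0:ℝ),0,1] ![1,-1,0] = 0; norm_num [dotProduct, Fin.sum_univ_three, Matrix.cons_val_two, Matrix.tail_cons, Matrix.head_cons])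
  have h_1_5 : G13.Adj 1 5 := g13_adj 1 5 (by decide)
    (by show dotProduct ![(0:ℝ),1,0] ![1,0,1] = 0; norm_num [dotProduct, Fin.sum_univ_three, Matrix.cons_val_two, Matrix.tail_cons, Matrix.head_cons])
  have h_1_6 : G13.Adj 1 6 := g13_adj 1 6 (by decide)
    (by show dotProduct ![(0:ℝ),1,0] ![1,0,-1] = 0; norm_num [dotProduct, Fin.sum_univ_three, Matrix.cons_val_two, Matrix.tail_cons, Matrix.head_cons])
  have h_0_7 : G13.Adj 0 7 := g13_adj 0 7 (by decide)
    (by show dotProduct ![(1:ℝ),0,0] ![0,1,1] = 0; norm_num [dotProduct, Fin.sum_univ_three, Matrix.cons_val_two, Matrix.tail_cons, Matrix.head_cons])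
  have h_0_8 : G13.Adj 0 8 := g13_adj 0 8 (by decide)
    (by show dotProduct ![(1:ℝ),0,0] ![0,1,-1] = 0; norm_num [dotProduct, Fin.sum_univ_three, Matrix.cons_val_two, Matrix.tail_cons, Matrix.head_cons])
  have h_3_4 : G13.Adj 3 4 := g13_adj 3 4 (by decide)
    (by show dotProduct ![(1:ℝ),1,0] ![1,-1,0] = 0; norm_num [dotProduct, Fin.sum_univ_three, Matrix.cons_val_two, Matrix.tail_cons, Matrix.head_cons])
  have h_3_11 : G13.Adj 3 11 := g13_adj 3 11 (by decide)
    (by show dotProduct ![(1:ℝ),1,0] ![1,-1,1] = 0; norm_num [dotProduct, Fin.sum_univ_three, Matrix.cons_val_two, Matrix.tail_cons, Matrix.head_cons])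
  have h_3_12 : G13.Adj 3 12 := g13_adj 3 12 (by decide)
    (by show dotProduct ![(1:ℝ),1,0] ![-1,1,1] = 0; norm_num [dotProduct, Fin.sum_univ_three, Matrix.cons_val_two, Matrix.tail_cons, Matrix.head_cons])
  have h_4_9 : G13.Adj 4 9 := g13_adj 4 9 (by decide)
    (by show dotProduct ![(1:ℝ),-1,0] ![1,1,1] = 0; norm_num [dotProduct, Fin.sum_univ_three, Matrix.cons_val_two, Matrix.tail_cons, Matrix.head_cons])
  have h_4_10 : G13.Adj 4 10 := g13_adj 4 10 (by decide)
    (by show dotProduct ![(1:ℝ),-1,0] ![1,1,-1] = 0; norm_num [dotProduct, Fin.sum_univ_three, Matrix.cons_val_two, Matrix.tail_cons, Matrix.head_cons])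
  have h_5_6 : G13.Adj 5 6 := g13_adj 5 6 (by decide)
    (by show dotProduct ![(1:ℝ),0,1] ![1,0,-1] = 0; norm_num [dotProduct, Fin.sum_univ_three, Matrix.cons_val_two, Matrix.tail_cons, Matrix.head_cons])
  have h_5_10 : G13.Adj 5 10 := g13_adj 5 10 (by decide)
    (by show dotProduct ![(1:ℝ),0,1] ![1,1,-1] = 0; norm_num [dotProduct, Fin.sum_univ_three, Matrix.cons_val_two, Matrix.tail_cons, Matrix.head_cons])
  have h_5_12 : G13.Adj 5 12 := g13_adj 5 12 (by decide)
    (by show dotProduct ![(1:ℝ),0,1] ![-1,1,1] = 0; norm_num [dotProduct, Fin.sum_univ_three, Matrix.cons_val_two, Matrix.tail_cons, Matrix.head_cons])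
  have h_6_9 : G13.Adj 6 9 := g13_adj 6 9 (by decide)
    (by show dotProduct ![(1:ℝ),0,-1] ![1,1,1] = 0; norm_num [dotProduct, Fin.sum_univ_three, Matrix.cons_val_two, Matrix.tail_cons, Matrix.head_cons])
  have h_6_11 : G13.Adj 6 11 := g13_adj 6 11 (by decide)
    (by show dotProduct ![(1:ℝ),0,-1] ![1,-1,1] = 0; norm_num [dotProduct, Fin.sum_univ_three, Matrix.cons_val_two, Matrix.tail_cons, Matrix.head_cons])
  have h_7_8 : G13.Adj 7 8 := g13_adj 7 8 (by decide)
    (by show dotProduct ![(0:ℝ),1,1] ![0,1,-1] = 0; norm_num [dotProduct, Fin.sum_univ_three, Matrix.cons_val_two, Matrix.tail_cons, Matrix.head_cons])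
  have h_7_10 : G13.Adj 7 10 := g13_adj 7 10 (by decide)
    (by show dotProduct ![(0:ℝ),1,1] ![1,1,-1] = 0; norm_num [dotProduct, Fin.sum_univ_three, Matrix.cons_val_two, Matrix.tail_cons, Matrix.head_cons])
  have h_7_11 : G13.Adj 7 11 := g13_adj 7 11 (by decide)
    (by show dotProduct ![(0:ℝ),1,1] ![1,-1,1] = 0; norm_num [dotProduct, Fin.sum_univ_three, Matrix.cons_val_two, Matrix.tail_cons, Matrix.head_cons])
  have h_8_9 : G13.Adj 8 9 := g13_adj 8 9 (by decide)
    (by show dotProduct ![(0:ℝ),1,-1] ![1,1,1] = 0; norm_num [dotProduct, Fin.sum_univ_three, Matrix.cons_val_two, Matrix.tail_cons, Matrix.head_cons])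
  have h_8_12 : G13.Adj 8 12 := g13_adj 8 12 (by decide)
    (by show dotProduct ![(0:ℝ),1,-1] ![-1,1,1] = 0; norm_num [dotProduct, Fin.sum_univ_three, Matrix.cons_val_two, Matrix.tail_cons, Matrix.head_cons])
  have d01 : C 0 ≠ C 1 := C.valid h_0_1
  have d02 : C 0 ≠ C 2 := C.valid h_0_2
  have d12 : C 1 ≠ C 2 := C.valid h_1_2
  have hv : Function.Injective ![C 0, C 1, C 2] := by
    intro x y hxy
    fin_cases x <;> fin_cases y <;> simp_all
  let e : Fin 3 ≃ Fin 3 :=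
    Equiv.ofBijective _ ((Finite.injective_iff_bijective).mp hv)
  set c : Fin 13 → Fin 3 := fun i => e.symm (C i) with hcdef
  have hc : ∀ i j, G13.Adj i j → c i ≠ c j :=
    fun i j h hcij => C.valid h (e.symm.injective hcij)
  have hc0 : c 0 = 0 := by
    show e.symm (C 0) = 0
    rw [show C 0 = e 0 from rfl, Equiv.symm_apply_apply]
  have hc1 : c 1 = 1 := by
    show e.symm (C 1) = 1
    rw [show C 1 = e 1 from rfl, Equiv.symm_apply_apply]
  have hc2 : c 2 = 2 := by
    show e.symm (C 2) = 2
    rw [show C 2 = e 2 from rfl, Equiv.symm_apply_apply]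
  exact g13key (c 3) (c 4) (c 5) (c 6) (c 7) (c 8) (c 9) (c 10) (c 11) (c 12)
    ⟨(fun h => hc 2 3 h_2_3 (hc2.trans h.symm)), (fun h => hc 2 4 h_2_4 (hc2.trans h.symm)), (fun h => hc 1 5 h_1_5 (hc1.trans h.symm)), (fun h => hc 1 6 h_1_6 (hc1.trans h.symm)), (fun h => hc 0 7 h_0_7 (hc0.trans h.symm)), (fun h => hc 0 8 h_0_8 (hc0.trans h.symm)),
     (hc 3 4 h_3_4), (hc 3 11 h_3_11), (hc 3 12 h_3_12), (hc 4 9 h_4_9), (hc 4 10 h_4_10), (hc 5 6 h_5_6), (hc 5 10 h_5_10), (hc 5 12 h_5_12), (hc 6 9 h_6_9), (hc 6 11 h_6_11), (hc 7 8 h_7_8), (hc 7 10 h_7_10), (hc 7 11 h_7_11), (hc 8 9 h_8_9), (hc 8 12 h_8_12)⟩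

/-- `G₁₃` has chromatic number at least 4. -/
theorem G13_chromaticNumber_ge_four : 4 ≤ G13.chromaticNumber := by
  have h := g13_not_colorable
  rw [← SimpleGraph.chromaticNumber_le_iff_colorable, not_le] at h
  exact Order.add_one_le_of_lt h
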